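/- For the Invincible Fighter (u = 1), for every integer s ≥ 1: lim_{t→0} N*(s,t) = 0 and lim_{t→∞} N*(s,t) = s·a(1); consequently, with D*(s,t) = N*(s,t) − N*(s−1,t), one has lim_{t→∞} D*(s,t) = a(1). -/

import Mathlib

open Real MeasureTheory Filter Topology

/-- Auxiliary history-based recursion: `Nhist a u n m t` equals `N(m,t)` when `m ≤ n`. -/
noncomputable def Nhist (a : ℕ → ℝ) (u : ℝ) : ℕ → ℕ → ℝ → ℝ
  | 0, _, _ => 0
  | n + 1, m, t =>
      if m ≤ n then Nhist a u n m t
      else (Finset.Icc 1 (n + 1)).sup'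
          (Finset.nonempty_Icc.mpr (Nat.succ_le_succ (Nat.zero_le n)))
          (fun j => a j + (a j * (1 - u) + u) *
            (Real.exp (-t) * ∫ x in (0:ℝ)..t, Nhist a u n (n + 1 - j) x * Real.exp x))

/-- `Nval a u n t` is `N(n,t)`, the optimal expected number of enemy planes shot down,
with `N(0,t) = 0` and `N(n,t) = max_{1 ≤ j ≤ n} N_n(j,t)`. -/
noncomputable def Nval (a : ℕ → ℝ) (u : ℝ) (n : ℕ) (t : ℝ) : ℝ :=
  Nhist a u n n t

/-- `Nstar a u r t` is `N*(r,t) = e^{-t} ∫_0^t N(r,x) e^x dx` (so `N*(0,t) = 0`). -/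
noncomputable def Nstar (a : ℕ → ℝ) (u : ℝ) (r : ℕ) (t : ℝ) : ℝ :=
  Real.exp (-t) * ∫ x in (0:ℝ)..t, Nval a u r x * Real.exp x

/-- `Nalloc a u n j t` is `N_n(j,t) = a(j) + c(j)·N*(n-j,t)` where `c(j) = a(j)(1-u)+u`. -/
noncomputable def Nalloc (a : ℕ → ℝ) (u : ℝ) (n j : ℕ) (t : ℝ) : ℝ :=
  a j + (a j * (1 - u) + u) * Nstar a u (n - j) t

/-- `Kopt a u n t = min { j ∈ {1,…,n} : N_n(j,t) = N(n,t) }`. -/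
noncomputable def Kopt (a : ℕ → ℝ) (u : ℝ) (n : ℕ) (t : ℝ) : ℕ :=
  sInf {j : ℕ | 1 ≤ j ∧ j ≤ n ∧ Nalloc a u n j t = Nval a u n t}

/-- For the Invincible Fighter (`u = 1`) and every `s ≥ 1`: `N*(s,t) → 0` as `t → 0⁺`,
`N*(s,t) → s·a(1)` as `t → ∞`, and hence `D*(s,t) = N*(s,t) - N*(s-1,t) → a(1)`
as `t → ∞`. -/

private lemma Nhist_eq_self (a : ℕ → ℝ) (u : ℝ) :
    ∀ n m, m ≤ n → ∀ t, Nhist a u n m t = Nval a u m t := by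
  intro n
  induction n with
  | zero =>
    intro m hm t
    interval_cases m
    rfl
  | succ n ih =>
    intro m hm t
    rcases Nat.lt_or_ge m (n + 1) with h | h
    · have hm' : m ≤ n := Nat.lt_succ_iff.mp h
      rw [show Nhist a u (n+1) m t = Nhist a u n m t by rw [Nhist]; simp [hm']]
      exact ih m hm' t
    · have : m = n + 1 := le_antisymm hm h
      subst this; rfl

private lemma Nval_succ (a : ℕ → ℝ) (u : ℝ) (n : ℕ) (t : ℝ) :
    Nval a u (n + 1) t = (Finset.Icc 1 (n + 1)).sup'
      (Finset.nonempty_Icc.mpr (Nat.succ_le_succ (Nat.zero_le n)))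
      (fun j => Nalloc a u (n + 1) j t) := by
  show Nhist a u (n + 1) (n + 1) t = _
  rw [Nhist, if_neg (Nat.not_succ_le_self n)]
  apply Finset.sup'_congr _ rfl
  intro j hj
  obtain ⟨hj1, hj2⟩ := Finset.mem_Icc.mp hj
  have hsub : n + 1 - j ≤ n := by omega
  unfold Nalloc Nstar
  congr 2
  congr 1
  apply intervalIntegral.integral_congr
  intro x _
  simp only [Nhist_eq_self a u n (n + 1 - j) hsub x]

private lemma expAvg_zero {g : ℝ → ℝ} (hg : Continuous g) (hg0 : Tendsto g atTop (nhds 0)) :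
    Tendsto (fun t => Real.exp (-t) * ∫ x in (0:ℝ)..t, g x * Real.exp x) atTop (nhds 0) := by
  rw [NormedAddCommGroup.tendsto_nhds_zero]
  intro ε hε
  have hε4 : (0:ℝ) < ε / 4 := by positivity
  obtain ⟨T₀, hT₀⟩ := eventually_atTop.1 (Metric.tendsto_nhds.mp hg0 (ε / 4) hε4)
  set T : ℝ := max T₀ 0 with hTdef
  have hgT : ∀ x, T ≤ x → |g x| ≤ ε / 4 := by
    intro x hx
    have := hT₀ x (le_trans (le_max_left _ _) hx)
    rw [Real.dist_eq, sub_zero] at this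
    exact this.le
  set H : ℝ := ∫ x in (0:ℝ)..T, g x * Real.exp x with hHdef
  have hHlim : Tendsto (fun t => Real.exp (-t) * |H|) atTop (nhds 0) := by
    simpa using (Real.tendsto_exp_neg_atTop_nhds_zero.mul_const |H|)
  have hev : ∀ᶠ t in atTop, Real.exp (-t) * |H| < ε / 2 := by
    have := hHlim.eventually (eventually_lt_nhds (show (0:ℝ) < ε/2 by positivity))
    simpa using this
  filter_upwards [eventually_ge_atTop T, hev] with t ht htH
  have hi1 : IntervalIntegrable (fun x => g x * Real.exp x) volume 0 T :=
    (hg.mul Real.continuous_exp).intervalIntegrable _ _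
  have hi2 : IntervalIntegrable (fun x => g x * Real.exp x) volume T t :=
    (hg.mul Real.continuous_exp).intervalIntegrable _ _
  have hsplit : (∫ x in (0:ℝ)..t, g x * Real.exp x)
      = H + ∫ x in T..t, g x * Real.exp x :=
    (intervalIntegral.integral_add_adjacent_intervals hi1 hi2).symm
  set S : ℝ := ∫ x in T..t, g x * Real.exp x with hSdef
  have htail : |S| ≤ ε / 4 * (Real.exp t - Real.exp T) := by
    calc |S| ≤ ∫ x in T..t, |g x * Real.exp x| :=
          intervalIntegral.abs_integral_le_integral_abs ht
      _ ≤ ∫ x in T..t, ε / 4 * Real.exp x := by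
          apply intervalIntegral.integral_mono_on ht
          · exact (hg.mul Real.continuous_exp).abs.intervalIntegrable _ _
          · exact (continuous_const.mul Real.continuous_exp).intervalIntegrable _ _
          · intro x hx
            rw [abs_mul, abs_of_pos (Real.exp_pos x)]
            exact mul_le_mul_of_nonneg_right (hgT x hx.1) (Real.exp_pos x).le
      _ = ε / 4 * (Real.exp t - Real.exp T) := by
          rw [intervalIntegral.integral_const_mul, integral_exp]
  rw [Real.norm_eq_abs, hsplit]
  have h1 : Real.exp (-t) * Real.exp t = 1 := by rw [← Real.exp_add]; simp
  have h2 : (0:ℝ) < Real.exp (-t) := Real.exp_pos _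
  have h3 : (0:ℝ) < Real.exp T := Real.exp_pos _
  have habs : |H + S| ≤ |H| + |S| := abs_add_le _ _
  have hmul : Real.exp (-t) * |H + S| ≤ Real.exp (-t) * (|H| + |S|) :=
    mul_le_mul_of_nonneg_left habs h2.le
  have hmul2 : Real.exp (-t) * |S| ≤ Real.exp (-t) * (ε / 4 * (Real.exp t - Real.exp T)) :=
    mul_le_mul_of_nonneg_left htail h2.le
  rw [abs_mul, abs_of_pos h2]
  nlinarith [abs_nonneg (H + S), abs_nonneg S, mul_pos h2 h3, hε4]

private lemma expAvg_tendsto {f : ℝ → ℝ} (hf : Continuous f) {L : ℝ}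
    (hL : Tendsto f atTop (nhds L)) :
    Tendsto (fun t => Real.exp (-t) * ∫ x in (0:ℝ)..t, f x * Real.exp x) atTop (nhds L) := by
  have heq : ∀ t : ℝ, Real.exp (-t) * ∫ x in (0:ℝ)..t, f x * Real.exp x
      = (Real.exp (-t) * ∫ x in (0:ℝ)..t, (f x - L) * Real.exp x)
        + (L - L * Real.exp (-t)) := by
    intro t
    have hi1 : IntervalIntegrable (fun x => (f x - L) * Real.exp x) volume 0 t :=
      ((hf.sub continuous_const).mul Real.continuous_exp).intervalIntegrable _ _
    have hi2 : IntervalIntegrable (fun x => L * Real.exp x) volume 0 t :=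
      (continuous_const.mul Real.continuous_exp).intervalIntegrable _ _
    have hsum : (∫ x in (0:ℝ)..t, f x * Real.exp x)
        = (∫ x in (0:ℝ)..t, (f x - L) * Real.exp x) + ∫ x in (0:ℝ)..t, L * Real.exp x := by
      rw [← intervalIntegral.integral_add hi1 hi2]
      apply intervalIntegral.integral_congr
      intro x _; ring
    rw [hsum, intervalIntegral.integral_const_mul, integral_exp, Real.exp_zero]
    have h1 : Real.exp (-t) * Real.exp t = 1 := by rw [← Real.exp_add]; simp
    linear_combination L * h1
  have h1 := expAvg_zero (hf.sub continuous_const)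
    (by have h := hL.sub_const L; rw [sub_self] at h; exact h)
  have h2 : Tendsto (fun t : ℝ => L - L * Real.exp (-t)) atTop (nhds L) := by
    have := Real.tendsto_exp_neg_atTop_nhds_zero.const_mul L
    simpa using tendsto_const_nhds.sub this
  have := h1.add h2
  rw [zero_add] at this
  exact this.congr (fun t => (heq t).symm)

/-- Facts about `N*` derived from facts about `N`. -/
private lemma Nstar_facts (a : ℕ → ℝ) (r : ℕ) (B : ℝ) (hB : 0 ≤ B)
    (hc : Continuous (Nval a 1 r))
    (hbd : ∀ t, 0 ≤ t → 0 ≤ Nval a 1 r t ∧ Nval a 1 r t ≤ B)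
    (hlim : Tendsto (Nval a 1 r) atTop (nhds B)) :
    Continuous (Nstar a 1 r) ∧
    (∀ t, 0 ≤ t → 0 ≤ Nstar a 1 r t ∧ Nstar a 1 r t ≤ B) ∧
    Tendsto (Nstar a 1 r) atTop (nhds B) := by
  have hint : ∀ p q : ℝ, IntervalIntegrable (fun x => Nval a 1 r x * Real.exp x) volume p q :=
    fun p q => (hc.mul Real.continuous_exp).intervalIntegrable p q
  refine ⟨?_, ?_, ?_⟩
  · exact ((Real.continuous_exp.comp continuous_neg).mul
      (intervalIntegral.continuous_primitive hint 0))
  · intro t ht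
    constructor
    · apply mul_nonneg (Real.exp_pos _).le
      apply intervalIntegral.integral_nonneg ht
      intro x hx
      exact mul_nonneg (hbd x hx.1).1 (Real.exp_pos x).le
    · have h1 : (∫ x in (0:ℝ)..t, Nval a 1 r x * Real.exp x)
          ≤ ∫ x in (0:ℝ)..t, B * Real.exp x := by
        apply intervalIntegral.integral_mono_on ht (hint 0 t)
          ((continuous_const.mul Real.continuous_exp).intervalIntegrable _ _)
        intro x hx
        exact mul_le_mul_of_nonneg_right (hbd x hx.1).2 (Real.exp_pos x).le
      have h2 : (∫ x in (0:ℝ)..t, B * Real.exp x) = B * (Real.exp t - 1) := by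
        rw [intervalIntegral.integral_const_mul, integral_exp, Real.exp_zero]
      rw [h2] at h1
      have h3 : Real.exp (-t) * Real.exp t = 1 := by rw [← Real.exp_add]; simp
      have h4 : (0:ℝ) < Real.exp (-t) := Real.exp_pos _
      have := mul_le_mul_of_nonneg_left h1 h4.le
      unfold Nstar
      nlinarith [mul_nonneg hB h4.le]
  · exact expAvg_tendsto hc hlim

private lemma main_ind (a : ℕ → ℝ) (ha1 : 0 ≤ a 1) (hnn : ∀ j, 0 ≤ a j)
    (hub : ∀ j : ℕ, a j ≤ j * a 1) :
    ∀ n : ℕ, Continuous (Nval a 1 n) ∧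
      (∀ t, 0 ≤ t → 0 ≤ Nval a 1 n t ∧ Nval a 1 n t ≤ n * a 1) ∧
      Tendsto (Nval a 1 n) atTop (nhds (n * a 1)) := by
  intro n
  induction n using Nat.strong_induction_on with
  | _ n ih =>
    match n with
    | 0 =>
      refine ⟨continuous_const, fun t ht => by norm_num [Nval, Nhist], ?_⟩
      have : ((0:ℕ):ℝ) * a 1 = 0 := by norm_num
      rw [this]
      exact tendsto_const_nhds
    | (n+1) =>
      have hstar : ∀ r : ℕ, r ≤ n → Continuous (Nstar a 1 r) ∧
          (∀ t, 0 ≤ t → 0 ≤ Nstar a 1 r t ∧ Nstar a 1 r t ≤ r * a 1) ∧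
          Tendsto (Nstar a 1 r) atTop (nhds (r * a 1)) := by
        intro r hr
        obtain ⟨hc, hbd, hlim⟩ := ih r (by omega)
        exact Nstar_facts a r (r * a 1) (by positivity) hc hbd hlim
      set hne := (Finset.nonempty_Icc.mpr (Nat.succ_le_succ (Nat.zero_le n)) :
        (Finset.Icc 1 (n+1)).Nonempty)
      have hmem1 : (1 : ℕ) ∈ Finset.Icc 1 (n + 1) := Finset.mem_Icc.mpr ⟨le_refl _, by omega⟩
      have hallocEq : ∀ j t, Nalloc a 1 (n+1) j t = a j + Nstar a 1 (n + 1 - j) t := by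
        intro j t; unfold Nalloc; ring
      have hcontAlloc : ∀ j ∈ Finset.Icc 1 (n+1),
          Continuous (fun t => Nalloc a 1 (n+1) j t) := by
        intro j hj
        obtain ⟨hj1, hj2⟩ := Finset.mem_Icc.mp hj
        have := (hstar (n + 1 - j) (by omega)).1
        simp only [hallocEq]
        exact continuous_const.add this
      refine ⟨?_, ?_, ?_⟩
      · rw [continuous_iff_continuousAt]
        intro t
        have : Tendsto (fun s => (Finset.Icc 1 (n+1)).sup' hne (fun j => Nalloc a 1 (n+1) j s))
            (nhds t) (nhds ((Finset.Icc 1 (n+1)).sup' hne (fun j => Nalloc a 1 (n+1) j t))) :=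
          Filter.Tendsto.finset_sup'_nhds_apply hne
            (fun j hj => ((hcontAlloc j hj).tendsto t))
        have he : ∀ s, Nval a 1 (n+1) s
            = (Finset.Icc 1 (n+1)).sup' hne (fun j => Nalloc a 1 (n+1) j s) :=
          fun s => Nval_succ a 1 n s
        unfold ContinuousAt
        rw [show Nval a 1 (n+1) = fun s => (Finset.Icc 1 (n+1)).sup' hne
          (fun j => Nalloc a 1 (n+1) j s) from funext he]
        exact this
      · intro t ht
        constructor
        · rw [Nval_succ]
          refine le_trans ?_ (Finset.le_sup' (fun j => Nalloc a 1 (n+1) j t) hmem1)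
          rw [hallocEq]
          have := ((hstar (n + 1 - 1) (by omega)).2.1 t ht).1
          linarith [hnn 1]
        · rw [Nval_succ]
          apply Finset.sup'_le
          intro j hj
          obtain ⟨hj1, hj2⟩ := Finset.mem_Icc.mp hj
          rw [hallocEq]
          have h1 := ((hstar (n + 1 - j) (by omega)).2.1 t ht).2
          have h2 := hub j
          have hcast : ((n + 1 - j : ℕ) : ℝ) = (n : ℝ) + 1 - (j : ℝ) := by
            push_cast [Nat.cast_sub hj2]; ring
          rw [hcast] at h1
          push_cast
          nlinarith [hnn j, ha1]
      · have hlow : Tendsto (fun t => a 1 + Nstar a 1 n t) atTop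
            (nhds (((n:ℝ) + 1) * a 1)) := by
          have := (hstar n le_rfl).2.2
          have h := (tendsto_const_nhds (x := a 1) (f := atTop)).add this
          convert h using 2
          ring
        apply tendsto_of_tendsto_of_tendsto_of_le_of_le' (f := Nval a 1 (n+1))
          (g := fun t => a 1 + Nstar a 1 n t) (h := fun _ => ((n:ℝ)+1) * a 1)
        · exact_mod_cast hlow
        · exact_mod_cast tendsto_const_nhds
        · filter_upwards [eventually_ge_atTop (0:ℝ)] with t ht
          rw [Nval_succ]
          refine le_trans ?_ (Finset.le_sup' (fun j => Nalloc a 1 (n+1) j t) hmem1)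
          rw [hallocEq]
          simp
        · filter_upwards [eventually_ge_atTop (0:ℝ)] with t ht
          rw [Nval_succ]
          apply Finset.sup'_le
          intro j hj
          obtain ⟨hj1, hj2⟩ := Finset.mem_Icc.mp hj
          rw [hallocEq]
          have h1 := ((hstar (n + 1 - j) (by omega)).2.1 t ht).2
          have hcast : ((n + 1 - j : ℕ) : ℝ) = (n : ℝ) + 1 - (j : ℝ) := by
            push_cast [Nat.cast_sub hj2]; ring
          rw [hcast] at h1
          have h2 := hub j
          push_cast
          nlinarith [hnn j, ha1]

theorem invincible_Nstar_limits
    (a : ℕ → ℝ) (haI : ∀ j, a j ∈ Set.Icc (0:ℝ) 1) (ha0 : a 0 = 0)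
    (hmono : StrictMono a)
    (hconc : ∀ j : ℕ, a (j + 2) - a (j + 1) < a (j + 1) - a j) :
    ∀ s : ℕ, 1 ≤ s →
      Tendsto (fun t => Nstar a 1 s t) (nhdsWithin 0 (Set.Ioi 0)) (nhds 0) ∧
      Tendsto (fun t => Nstar a 1 s t) atTop (nhds ((s : ℝ) * a 1)) ∧
      Tendsto (fun t => Nstar a 1 s t - Nstar a 1 (s - 1) t) atTop (nhds (a 1)) := by
  have hnn : ∀ j, 0 ≤ a j := fun j => (haI j).1
  have ha1 : 0 ≤ a 1 := hnn 1
  have hd : ∀ j : ℕ, a (j + 1) - a j ≤ a 1 := by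
    intro j
    induction j with
    | zero => simp [ha0]
    | succ k ih => have := hconc k; linarith
  have hub : ∀ j : ℕ, a j ≤ j * a 1 := by
    intro j
    induction j with
    | zero => simp [ha0]
    | succ k ih =>
      have := hd k
      push_cast
      nlinarith
  intro s hs
  obtain ⟨hc, hbd, hlim⟩ := main_ind a ha1 hnn hub s
  obtain ⟨hcS, hbdS, hlimS⟩ := Nstar_facts a s ((s:ℝ) * a 1) (by positivity) hc hbd hlim
  obtain ⟨hc', hbd', hlim'⟩ := main_ind a ha1 hnn hub (s - 1)
  obtain ⟨hcS', hbdS', hlimS'⟩ := Nstar_facts a (s - 1) (((s - 1 : ℕ):ℝ) * a 1)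
    (by positivity) hc' hbd' hlim'
  refine ⟨?_, hlimS, ?_⟩
  · have h0 : Nstar a 1 s 0 = 0 := by
      unfold Nstar; simp
    have h := (hcS.tendsto 0).mono_left (nhdsWithin_le_nhds (s := Set.Ioi (0:ℝ)))
    rwa [h0] at h
  · have h := hlimS.sub hlimS'
    have hcast : (s:ℝ) * a 1 - ((s - 1 : ℕ):ℝ) * a 1 = a 1 := by
      rw [Nat.cast_sub hs]; ring
    rwa [hcast] at h
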